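/- Let λ, μ be multipartitions of the same content α, represented on an l-runner abacus via a multicharge with k̃_m − k̃_{m+1} ≥ ht(α) + e for all m. If μ >_lex λ (lexicographically on the sequence of component partitions), then μ̄ >_lex λ̄, where λ̄ denotes the partition obtained by reading the combined abacus (rows interleaved by the Uglov indexing els + e(m−1) + t for position n = es + t, 1 ≤ t ≤ e). -/
import Mathlib


open scoped Classical

/-- An `l`-multipartition, encoded as a function assigning to each component
`m < l` and each row index `a` (0-indexed) the length of that row. -/
abbrev MP (l : ℕ) := Fin l → ℕ → ℕ

/-- `lam` really is a multipartition. -/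
def IsMP {l : ℕ} (lam : MP l) : Prop :=
  (∀ m, Antitone (lam m)) ∧ ∃ N, ∀ m a, N ≤ a → lam m a = 0

/-- The total number of nodes `|λ|`. -/
noncomputable def totalSize {l : ℕ} (lam : MP l) : ℕ := ∑ᶠ m, ∑ᶠ a, lam m a

/-- The number of nodes of `λ` of residue `i ∈ ℤ/eℤ` (node `(m,a,b)` has residue
`k̃_m + b − a`). -/
noncomputable def resCont (e : ℕ) {l : ℕ} (k : Fin l → ℤ) (lam : MP l) (i : ZMod e) : ℕ :=
  Set.ncard {x : Fin l × ℕ × ℕ |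
    x.2.2 < lam x.1 x.2.1 ∧ ((k x.1 + x.2.2 - x.2.1 : ℤ) : ZMod e) = i}

/-- Uglov's reindexing of the abacus: the position in row `m` (0-indexed) and
column `n ∈ ℤ` is reindexed by the integer `e·l·s + e·m + t`, where `n = e·s + t`
with `1 ≤ t ≤ e`. -/
def uglovIdx (e l : ℕ) (m : Fin l) (n : ℤ) : ℤ :=
  (e : ℤ) * l * ((n - 1) / (e : ℤ)) + (e : ℤ) * m.1 + ((n - 1) % (e : ℤ)) + 1

/-- The set of Uglov indices of the beads of the abacus display `A(λ)`: the bead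
positions in row `m` are the columns `k̃_m + λ^{(m)}_a − a` for `a = 0, 1, 2, …`
(0-indexed rows). -/
def beads (e l : ℕ) (k : Fin l → ℤ) (lam : MP l) : Set ℤ :=
  {u | ∃ (m : Fin l) (a : ℕ), u = uglovIdx e l m (k m + lam m a - a)}

/-- `lbar` is the partition `λ̄` associated to `λ` by the inverse of Uglov's
`(l,e)`-quotient map: the beads of `A(λ)` occupy exactly the positions indexed by
the beta-numbers `k̃₁ + ⋯ + k̃_l + λ̄_b − b` for `b = 0, 1, 2, …`. -/
def IsUglovBar (e l : ℕ) (k : Fin l → ℤ) (lam : MP l) (lbar : ℕ → ℕ) : Prop :=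
  Antitone lbar ∧ (∃ N, ∀ b, N ≤ b → lbar b = 0) ∧
    beads e l k lam = Set.range fun b : ℕ => (∑ m, k m) + lbar b - b

/-- The dominance order `μ̄ ⊴ λ̄` on partitions (encoded as eventually-zero
antitone functions `ℕ → ℕ`). -/
def PtnDom (mbar lbar : ℕ → ℕ) : Prop :=
  (∀ c : ℕ, ∑ b ∈ Finset.range (c + 1), mbar b ≤ ∑ b ∈ Finset.range (c + 1), lbar b)
    ∧ (∑ᶠ b, mbar b) = ∑ᶠ b, lbar b

/-- The lexicographic order on partitions: `f <_lex g`. -/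
def PtnLexLt (f g : ℕ → ℕ) : Prop :=
  ∃ a : ℕ, (∀ b < a, f b = g b) ∧ f a < g a

/-- The lexicographic order on `l`-multipartitions: `μ <_lex λ`. -/
def MPLexLt {l : ℕ} (mu lam : MP l) : Prop :=
  ∃ m : Fin l, (∀ m' < m, mu m' = lam m') ∧ PtnLexLt (mu m) (lam m)


section AuxLemmas

lemma aux_unique_div {w x y c c' : ℤ} (hw : 0 < w) (hc : 0 ≤ c) (hc2 : c < w)
    (hc' : 0 ≤ c') (hc2' : c' < w) (h : w * x + c = w * y + c') : x = y ∧ c = c' := by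
  have hx : x = y := by
    rcases lt_trichotomy x y with h1 | h1 | h1
    · nlinarith [mul_le_mul_of_nonneg_left (show x + 1 ≤ y by omega) (le_of_lt hw)]
    · exact h1
    · nlinarith [mul_le_mul_of_nonneg_left (show y + 1 ≤ x by omega) (le_of_lt hw)]
  subst hx
  exact ⟨rfl, by linarith⟩

lemma aux_div_lt {e : ℕ} (he : 0 < e) {n₀ n : ℤ} (h : n₀ + e ≤ n) :
    (n₀ - 1) / (e : ℤ) < (n - 1) / (e : ℤ) := by
  have he' : (0:ℤ) < e := by exact_mod_cast he
  have h1 : (n₀ - 1) / (e:ℤ) ≤ (n - 1 - e) / (e:ℤ) := Int.ediv_le_ediv he' (by omega)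
  have h2 : (n - 1 - (e:ℤ)) / (e:ℤ) = (n - 1) / (e:ℤ) - 1 := by
    have := Int.add_mul_ediv_left (n - 1) (-1) (show (e:ℤ) ≠ 0 by omega)
    rw [show n - 1 - (e:ℤ) = n - 1 + (e:ℤ) * (-1) by ring, this]; ring
  omega

variable {e l : ℕ}

lemma aux_uglov_block_lt (he : 0 < e) (m₀ m : Fin l) {n₀ n : ℤ}
    (h : (n₀ - 1) / (e:ℤ) < (n - 1) / (e:ℤ)) :
    uglovIdx e l m₀ n₀ < uglovIdx e l m n := by
  have he' : (0:ℤ) < e := by exact_mod_cast he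
  have hm₀ : (m₀.1 : ℤ) ≤ (l:ℤ) - 1 := by
    have := m₀.2; omega
  have hr₀ : (n₀ - 1) % (e:ℤ) < e := Int.emod_lt_of_pos _ he'
  have hr : 0 ≤ (n - 1) % (e:ℤ) := Int.emod_nonneg _ (by omega)
  have hm : (0:ℤ) ≤ (m.1 : ℤ) := by positivity
  unfold uglovIdx
  have h1 : (e:ℤ) * l * ((n₀-1)/(e:ℤ) + 1) ≤ (e:ℤ) * l * ((n-1)/(e:ℤ)) := by
    apply mul_le_mul_of_nonneg_left (by omega) (by positivity)
  have h2 : (e:ℤ) * (m₀.1:ℤ) ≤ (e:ℤ) * ((l:ℤ) - 1) :=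
    mul_le_mul_of_nonneg_left hm₀ (by positivity)
  have h3 : (e:ℤ) * ((l:ℤ) - 1) = (e:ℤ) * l - e := by ring
  have h4 : (e:ℤ) * l * ((n₀-1)/(e:ℤ) + 1) = (e:ℤ) * l * ((n₀-1)/(e:ℤ)) + (e:ℤ)*l := by ring
  have h5 : (0:ℤ) ≤ (e:ℤ) * (m.1:ℤ) := by positivity
  linarith

lemma aux_uglov_row_lt (he : 0 < e) (m : Fin l) {n n' : ℤ} (h : n < n') :
    uglovIdx e l m n < uglovIdx e l m n' := by
  have he' : (0:ℤ) < e := by exact_mod_cast he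
  have hs : (n - 1) / (e:ℤ) ≤ (n' - 1) / (e:ℤ) := Int.ediv_le_ediv he' (by omega)
  rcases eq_or_lt_of_le hs with hs1 | hs1
  · have e1 := Int.mul_ediv_add_emod (n - 1) (e:ℤ)
    have e2 := Int.mul_ediv_add_emod (n' - 1) (e:ℤ)
    unfold uglovIdx
    rw [← hs1] at e2 ⊢
    omega
  · exact aux_uglov_block_lt he m m hs1

lemma aux_uglov_row_le (he : 0 < e) (m : Fin l) {n n' : ℤ} (h : n ≤ n') :
    uglovIdx e l m n ≤ uglovIdx e l m n' := by
  rcases eq_or_lt_of_le h with h1 | h1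
  · rw [h1]
  · exact le_of_lt (aux_uglov_row_lt he m h1)

lemma aux_uglov_inj (he : 0 < e) {m m' : Fin l} {n n' : ℤ}
    (h : uglovIdx e l m n = uglovIdx e l m' n') : m = m' ∧ n = n' := by
  have he' : (0:ℤ) < e := by exact_mod_cast he
  have hl : 0 < l := m.pos
  have hl' : (0:ℤ) < l := by exact_mod_cast hl
  have hr : 0 ≤ (n - 1) % (e:ℤ) := Int.emod_nonneg _ (by omega)
  have hr2 : (n - 1) % (e:ℤ) < e := Int.emod_lt_of_pos _ he'
  have hr' : 0 ≤ (n' - 1) % (e:ℤ) := Int.emod_nonneg _ (by omega)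
  have hr2' : (n' - 1) % (e:ℤ) < e := Int.emod_lt_of_pos _ he'
  have hm : (0:ℤ) ≤ (m.1:ℤ) := by positivity
  have hm' : (0:ℤ) ≤ (m'.1:ℤ) := by positivity
  have hmb : (e:ℤ) * (m.1:ℤ) + (n-1) % (e:ℤ) < (e:ℤ) * l := by
    have h2 : (e:ℤ) * (m.1:ℤ) ≤ (e:ℤ) * ((l:ℤ) - 1) :=
      mul_le_mul_of_nonneg_left (by have := m.2; omega) (by positivity)
    nlinarith
  have hmb' : (e:ℤ) * (m'.1:ℤ) + (n'-1) % (e:ℤ) < (e:ℤ) * l := by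
    have h2 : (e:ℤ) * (m'.1:ℤ) ≤ (e:ℤ) * ((l:ℤ) - 1) :=
      mul_le_mul_of_nonneg_left (by have := m'.2; omega) (by positivity)
    nlinarith
  have hkey : (e:ℤ) * l * ((n-1)/(e:ℤ)) + ((e:ℤ) * (m.1:ℤ) + (n-1) % (e:ℤ))
      = (e:ℤ) * l * ((n'-1)/(e:ℤ)) + ((e:ℤ) * (m'.1:ℤ) + (n'-1) % (e:ℤ)) := by
    unfold uglovIdx at h; linarith
  obtain ⟨hs, hc⟩ := aux_unique_div (by positivity) (by positivity) hmb (by positivity) hmb' hkey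
  obtain ⟨hm1, hm2⟩ := aux_unique_div he' hr hr2 hr' hr2' hc
  have hmm : m = m' := Fin.ext (by exact_mod_cast hm1)
  have e1 := Int.mul_ediv_add_emod (n - 1) (e:ℤ)
  have e2 := Int.mul_ediv_add_emod (n' - 1) (e:ℤ)
  refine ⟨hmm, ?_⟩
  have : (e:ℤ) * ((n-1)/(e:ℤ)) = (e:ℤ) * ((n'-1)/(e:ℤ)) := by rw [hs]
  omega

lemma aux_size_pair {l : ℕ} {nu : MP l} (h : IsMP nu) {m m' : Fin l} (hmm : m ≠ m')
    {a : ℕ} (ha : ∀ b < a, 1 ≤ nu m b) (c : ℕ) : a + nu m' c ≤ totalSize nu := by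
  obtain ⟨hant, N, hN⟩ := h
  set M := max N (max a (c + 1)) with hM
  have key : ∀ m0 : Fin l, ∑ᶠ b, nu m0 b = ∑ b ∈ Finset.range M, nu m0 b := by
    intro m0
    apply finsum_eq_finset_sum_of_support_subset
    intro b hb
    simp only [Function.mem_support] at hb
    simp only [Finset.coe_range, Set.mem_Iio]
    by_contra hc
    push_neg at hc
    exact hb (hN _ _ (le_trans (le_max_left _ _) hc))
  have h1 : a ≤ ∑ b ∈ Finset.range M, nu m b := by
    calc a = ∑ _b ∈ Finset.range a, 1 := by simp
    _ ≤ ∑ b ∈ Finset.range a, nu m b :=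
        Finset.sum_le_sum (fun b hb => ha b (Finset.mem_range.mp hb))
    _ ≤ ∑ b ∈ Finset.range M, nu m b :=
        Finset.sum_le_sum_of_subset (Finset.range_subset_range.mpr (by omega))
  have h2 : nu m' c ≤ ∑ b ∈ Finset.range M, nu m' b :=
    Finset.single_le_sum (f := nu m') (fun i _ => Nat.zero_le _) (Finset.mem_range.mpr (by omega))
  have h3 : totalSize nu = ∑ m0 : Fin l, ∑ᶠ b, nu m0 b := finsum_eq_sum_of_fintype _
  have h5 : ∑ m0 ∈ ({m, m'} : Finset (Fin l)), ∑ᶠ b, nu m0 b ≤ ∑ m0 : Fin l, ∑ᶠ b, nu m0 b :=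
    Finset.sum_le_sum_of_subset (Finset.subset_univ _)
  rw [Finset.sum_pair hmm, key m, key m'] at h5
  omega

lemma aux_chain {l : ℕ} (k : Fin l → ℤ) (T e : ℕ)
    (hgap : ∀ (m : ℕ) (h : m + 1 < l), (T : ℤ) + e ≤ k ⟨m, Nat.lt_of_succ_lt h⟩ - k ⟨m + 1, h⟩)
    {m m' : Fin l} (h : m < m') : (T : ℤ) + e ≤ k m - k m' := by
  have key : ∀ j (hj : j < l), m.1 < j → (T:ℤ) + e ≤ k m - k ⟨j, hj⟩ := by
    intro j
    induction j with
    | zero => intro hj h0; omega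
    | succ i ih =>
      intro hj hmi
      have hgi := hgap i hj
      rcases Nat.lt_or_ge m.1 i with h1 | h1
      · have hih := ih (Nat.lt_of_succ_lt hj) h1
        have hT : (0:ℤ) ≤ (T:ℤ) + e := by positivity
        linarith
      · have hme : m.1 = i := by omega
        have hm : m = ⟨i, Nat.lt_of_succ_lt hj⟩ := Fin.ext hme
        rw [hm]; exact hgi
  exact key m'.1 m'.2 h

end AuxLemmas

/-- let `λ, μ` be `l`-multipartitions of the same content `α`,
represented on an `l`-runner abacus via a multicharge with
`k̃_m − k̃_{m+1} ≥ ht(α) + e` for all `m`.  If `μ >_lex λ` (lexicographically on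
the sequence of component partitions), then `μ̄ >_lex λ̄`, where `λ̄` denotes the
partition obtained by reading the combined abacus under Uglov's reindexing. -/
theorem lex_implies_bar_lex
    (e : ℕ) (l : ℕ) (he : 2 ≤ e) (k : Fin l → ℤ)
    (lam mu : MP l) (hlam : IsMP lam) (hmu : IsMP mu)
    -- λ and μ have the same content α, of height ht(α) = |λ|
    (hsize : totalSize mu = totalSize lam)
    (hcont : ∀ i : ZMod e, resCont e k mu i = resCont e k lam i)
    -- the multicharge condition k̃_m − k̃_{m+1} ≥ ht(α) + e
    (hgap : ∀ (m : ℕ) (h : m + 1 < l),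
      (totalSize lam : ℤ) + e ≤ k ⟨m, Nat.lt_of_succ_lt h⟩ - k ⟨m + 1, h⟩)
    -- the associated partitions λ̄ and μ̄
    (lbar mbar : ℕ → ℕ)
    (hlbar : IsUglovBar e l k lam lbar) (hmbar : IsUglovBar e l k mu mbar)
    -- μ >_lex λ
    (hlex : MPLexLt lam mu) :
    PtnLexLt lbar mbar := by
  classical
  obtain ⟨m, hcomp, a, hrow, hlt⟩ := hlex
  have he' : 0 < e := by omega
  set T : ℕ := totalSize lam with hT
  have hlamant := hlam.1
  have hmuant := hmu.1
  set cstar : ℤ := k m + mu m a - a with hcstar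
  set ustar : ℤ := uglovIdx e l m cstar with hustar
  have hmupos : 1 ≤ mu m a := by omega
  have hposmu : ∀ b < a + 1, 1 ≤ mu m b := fun b hb =>
    le_trans hmupos (hmuant m (by omega))
  have hposlam : ∀ b < a, 1 ≤ lam m b := fun b hb => by
    rw [hrow b hb]; exact le_trans hmupos (hmuant m (le_of_lt hb))
  have K1 : ustar ∈ beads e l k mu := ⟨m, a, by rw [hustar, hcstar]⟩
  have K2 : ustar ∉ beads e l k lam := by
    rintro ⟨m₀, b, hb⟩
    rw [hustar] at hb
    obtain ⟨hm0, hcol⟩ := aux_uglov_inj he' hb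
    subst hm0
    rw [hcstar] at hcol
    rcases lt_or_ge b a with hba | hba
    · have h1 : lam m b = mu m b := hrow b hba
      have h2 : mu m a ≤ mu m b := hmuant m (le_of_lt hba)
      omega
    · have h2 : lam m b ≤ lam m a := hlamant m hba
      omega
  have hchain : ∀ m₀ : Fin l, m < m₀ → (T:ℤ) + e ≤ k m - k m₀ :=
    fun m₀ h => aux_chain k T e hgap h
  have hboundmu : ∀ m₀ : Fin l, m < m₀ → ∀ b : ℕ, (k m₀ + mu m₀ b - b) + e ≤ cstar := by
    intro m₀ hmm b
    have hsz : (a + 1) + mu m₀ 0 ≤ totalSize mu := aux_size_pair hmu (ne_of_lt hmm) hposmu 0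
    rw [hsize] at hsz
    have hc := hchain m₀ hmm
    have hmono : mu m₀ b ≤ mu m₀ 0 := hmuant m₀ (Nat.zero_le b)
    rw [hcstar]
    omega
  have hboundlam : ∀ m₀ : Fin l, m < m₀ → ∀ b : ℕ, (k m₀ + lam m₀ b - b) + e ≤ cstar := by
    intro m₀ hmm b
    have hsz : a + lam m₀ 0 ≤ T := aux_size_pair hlam (ne_of_lt hmm) hposlam 0
    have hc := hchain m₀ hmm
    have hmono : lam m₀ b ≤ lam m₀ 0 := hlamant m₀ (Nat.zero_le b)
    rw [hcstar]
    omega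
  have K3 : ∀ v ∈ beads e l k mu, v ∉ beads e l k lam → v ≤ ustar := by
    rintro v ⟨m₀, b, hv⟩ hnot
    rcases lt_trichotomy m₀ m with hc | hc | hc
    · exact absurd ⟨m₀, b, by rw [hcomp m₀ hc]; exact hv⟩ hnot
    · subst hc
      rcases lt_or_ge b a with hba | hba
      · exact absurd ⟨m₀, b, by rw [hrow b hba]; exact hv⟩ hnot
      · have h2 : mu m₀ b ≤ mu m₀ a := hmuant m₀ hba
        have hcle : k m₀ + mu m₀ b - b ≤ cstar := by rw [hcstar]; omega
        rw [hv, hustar]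
        exact aux_uglov_row_le he' m₀ hcle
    · have hb := hboundmu m₀ hc b
      rw [hv, hustar]
      exact le_of_lt (aux_uglov_block_lt he' m₀ m (aux_div_lt he' hb))
  have K3' : ∀ v ∈ beads e l k lam, v ∉ beads e l k mu → v ≤ ustar := by
    rintro v ⟨m₀, b, hv⟩ hnot
    rcases lt_trichotomy m₀ m with hc | hc | hc
    · exact absurd ⟨m₀, b, by rw [← hcomp m₀ hc]; exact hv⟩ hnot
    · subst hc
      rcases lt_or_ge b a with hba | hba
      · exact absurd ⟨m₀, b, by rw [← hrow b hba]; exact hv⟩ hnot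
      · have h2 : lam m₀ b ≤ lam m₀ a := hlamant m₀ hba
        have hcle : k m₀ + lam m₀ b - b ≤ cstar := by rw [hcstar]; omega
        rw [hv, hustar]
        exact aux_uglov_row_le he' m₀ hcle
    · have hb := hboundlam m₀ hc b
      rw [hv, hustar]
      exact le_of_lt (aux_uglov_block_lt he' m₀ m (aux_div_lt he' hb))
  obtain ⟨hlant, ⟨Nl, hNl⟩, hlset⟩ := hlbar
  obtain ⟨hmant, ⟨Nm, hNm⟩, hmset⟩ := hmbar
  rw [hmset] at K1
  rw [hlset] at K2
  rw [hmset, hlset] at K3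
  rw [hlset, hmset] at K3'
  set S : ℤ := ∑ m', k m' with hS
  obtain ⟨b₀, hb₀⟩ := K1
  simp only at hb₀
  have hdiff : ∃ b, lbar b ≠ mbar b := by
    by_contra hcon
    push_neg at hcon
    exact K2 ⟨b₀, by simp only; rw [hcon b₀]; exact hb₀⟩
  have hfa : lbar (Nat.find hdiff) ≠ mbar (Nat.find hdiff) := Nat.find_spec hdiff
  set a' := Nat.find hdiff with ha'
  have hfb : ∀ b < a', lbar b = mbar b := fun b hb =>
    not_ne_iff.mp (Nat.find_min hdiff hb)
  refine ⟨a', hfb, ?_⟩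
  by_contra hge
  push_neg at hge
  have hlt' : mbar a' < lbar a' := lt_of_le_of_ne hge (fun h => hfa h.symm)
  have hw1 : (S + lbar a' - a') ∈ Set.range fun b : ℕ => S + lbar b - b := ⟨a', rfl⟩
  have hw2 : (S + lbar a' - a') ∉ Set.range fun b : ℕ => S + mbar b - b := by
    rintro ⟨b, hb⟩
    simp only at hb
    rcases lt_or_ge b a' with hba | hba
    · have h1 : lbar b = mbar b := hfb b hba
      have h2 : lbar a' ≤ lbar b := hlant (le_of_lt hba)
      omega
    · have h2 : mbar b ≤ mbar a' := hmant hba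
      omega
  have hwle := K3' _ hw1 hw2
  have hwne : (S + lbar a' - a') ≠ ustar := fun h => K2 (h ▸ hw1)
  have hb₀a : a' ≤ b₀ := by
    by_contra hcon
    push_neg at hcon
    exact K2 ⟨b₀, by simp only; rw [hfb b₀ hcon]; exact hb₀⟩
  have h3 : mbar b₀ ≤ mbar a' := hmant hb₀a
  omega
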